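/- Let n ≥ 1, 0 < θ < 1/(2n+1), and let (a_k) be a sequence of positive reals with a_{k+1} ≤ θ·a_k for all k. Then the image of the map h(u) = Σ_k a_k·u_k, defined on sequences u : ℕ → {-n,...,n}, has Lebesgue measure zero. -/

import Mathlib

/-- With `n ≥ 1`, `0 < θ < 1/(2n+1)` and a positive sequence `a` with
`a (k+1) ≤ θ * a k`, the image of the map `u ↦ ∑ k, a k * u k`, defined on sequences
`u : ℕ → ℤ` with `|u k| ≤ n`, has Lebesgue measure zero. -/
theorem cantor_measure_zero (n : ℕ) (hn : 1 ≤ n) (θ : ℝ) (hθ0 : 0 < θ)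
    (hθ : θ < 1 / (2 * n + 1))
    (a : ℕ → ℝ) (ha : ∀ k, 0 < a k) (hd : ∀ k, a (k + 1) ≤ θ * a k) :
    MeasureTheory.volume
      {x : ℝ | ∃ u : ℕ → ℤ, (∀ k, |u k| ≤ (n : ℤ)) ∧ x = ∑' k, a k * (u k : ℝ)} = 0 := by
  set E := {x : ℝ | ∃ u : ℕ → ℤ, (∀ k, |u k| ≤ (n : ℤ)) ∧ x = ∑' k, a k * (u k : ℝ)} with hE
  have h2n1 : (0:ℝ) < 2 * n + 1 := by positivity
  have hn1 : (1:ℝ) ≤ (n:ℝ) := by exact_mod_cast hn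
  have hθ1 : θ < 1 := lt_of_lt_of_le hθ (by rw [div_le_one h2n1]; nlinarith)
  have h1θ : 0 < 1 - θ := by linarith
  -- geometric decay
  have hgeo : ∀ m k, a (m + k) ≤ a m * θ ^ k := by
    intro m k
    induction k with
    | zero => simp
    | succ k ih =>
      have : a (m + (k + 1)) = a ((m + k) + 1) := by ring_nf
      rw [this]
      calc a ((m + k) + 1) ≤ θ * a (m + k) := hd _
        _ ≤ θ * (a m * θ ^ k) := by
            exact mul_le_mul_of_nonneg_left ih hθ0.le
        _ = a m * θ ^ (k + 1) := by ring
  have hsum0 : Summable (fun k => θ ^ k) := summable_geometric_of_lt_one hθ0.le hθ1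
  -- summability for admissible u
  have hsumm : ∀ (u : ℕ → ℤ), (∀ k, |u k| ≤ (n : ℤ)) →
      Summable (fun k => a k * (u k : ℝ)) := by
    intro u hu
    apply Summable.of_norm_bounded (g := fun k => (a 0 * n) * θ ^ k) (hsum0.mul_left _)
    intro k
    have h1 : |(u k : ℝ)| ≤ (n : ℝ) := by exact_mod_cast hu k
    have h2 : a k ≤ a 0 * θ ^ k := by simpa using hgeo 0 k
    have := (ha k).le
    rw [Real.norm_eq_abs, abs_mul, abs_of_nonneg this]
    calc a k * |(u k : ℝ)| ≤ (a 0 * θ ^ k) * (n : ℝ) := by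
          apply mul_le_mul h2 h1 (abs_nonneg _) (mul_nonneg (ha 0).le (pow_nonneg hθ0.le k))
      _ = (a 0 * n) * θ ^ k := by ring
  -- tail bound
  have tail : ∀ (u : ℕ → ℤ), (∀ k, |u k| ≤ (n : ℤ)) → ∀ m,
      |∑' k, a k * (u k : ℝ) - ∑ k ∈ Finset.range m, a k * (u k : ℝ)|
        ≤ a m * n / (1 - θ) := by
    intro u hu m
    have hs := hsumm u hu
    have hsplit := Summable.sum_add_tsum_nat_add m hs
    have heq : ∑' k, a k * (u k : ℝ) - ∑ k ∈ Finset.range m, a k * (u k : ℝ)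
        = ∑' k, a (k + m) * (u (k + m) : ℝ) := by
      rw [← hsplit]; ring
    rw [heq]
    have hb : ∀ k, ‖a (k + m) * (u (k + m) : ℝ)‖ ≤ (a m * n) * θ ^ k := by
      intro k
      have h1 : |(u (k + m) : ℝ)| ≤ (n : ℝ) := by exact_mod_cast hu (k + m)
      have h2 : a (k + m) ≤ a m * θ ^ k := by
        have := hgeo m k; rwa [Nat.add_comm m k] at this
      rw [Real.norm_eq_abs, abs_mul, abs_of_nonneg (ha _).le]
      calc a (k + m) * |(u (k + m) : ℝ)| ≤ (a m * θ ^ k) * (n : ℝ) := by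
            apply mul_le_mul h2 h1 (abs_nonneg _) (mul_nonneg (ha m).le (pow_nonneg hθ0.le k))
        _ = (a m * n) * θ ^ k := by ring
    calc |∑' k, a (k + m) * (u (k + m) : ℝ)|
        ≤ ∑' k, (a m * n) * θ ^ k := by
          refine tsum_of_norm_bounded ?_ hb
          exact (hsum0.mul_left _).hasSum
      _ = (a m * n) * (1 - θ)⁻¹ := by
          rw [tsum_mul_left, tsum_geometric_of_lt_one hθ0.le hθ1]
      _ = a m * n / (1 - θ) := by ring
  -- covering bound for each m
  have key : ∀ m : ℕ, MeasureTheory.volume E ≤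
      ENNReal.ofReal ((2 * a 0 * n / (1 - θ)) * ((2 * n + 1) * θ) ^ m) := by
    intro m
    set T : ℝ := a m * n / (1 - θ) with hT
    have hT0 : 0 ≤ T :=
      div_nonneg (mul_nonneg (ha m).le (Nat.cast_nonneg n)) h1θ.le
    have hcov : E ⊆ ⋃ (v : Fin m → (Finset.Icc (-(n:ℤ)) (n:ℤ))),
        Metric.closedBall (∑ i : Fin m, a i * ((v i : ℤ) : ℝ)) T := by
      rintro x ⟨u, hu, rfl⟩
      refine Set.mem_iUnion.mpr ⟨fun i => ⟨u i, Finset.mem_Icc.mpr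
        ⟨neg_le_of_abs_le (hu i), le_of_abs_le (hu i)⟩⟩, ?_⟩
      rw [Metric.mem_closedBall, Real.dist_eq]
      have : (∑ i : Fin m, a i * ((u i : ℤ) : ℝ))
          = ∑ k ∈ Finset.range m, a k * (u k : ℝ) :=
        Fin.sum_univ_eq_sum_range (fun k => a k * (u k : ℝ)) m
      rw [this]
      exact tail u hu m
    have hcard : Fintype.card (Fin m → (Finset.Icc (-(n:ℤ)) (n:ℤ))) = (2 * n + 1) ^ m := by
      rw [Fintype.card_fun, Fintype.card_coe, Int.card_Icc, Fintype.card_fin]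
      congr 1
      omega
    calc MeasureTheory.volume E
        ≤ ∑ v : Fin m → (Finset.Icc (-(n:ℤ)) (n:ℤ)),
            MeasureTheory.volume (Metric.closedBall (∑ i : Fin m, a i * ((v i : ℤ) : ℝ)) T) :=
          le_trans (MeasureTheory.measure_mono hcov) (MeasureTheory.measure_iUnion_fintype_le _ _)
      _ = ∑ v : Fin m → (Finset.Icc (-(n:ℤ)) (n:ℤ)), ENNReal.ofReal (2 * T) := by
          simp [Real.volume_closedBall]
      _ = ((2 * n + 1) ^ m : ℕ) * ENNReal.ofReal (2 * T) := by
          rw [Finset.sum_const, Finset.card_univ, hcard, nsmul_eq_mul]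
      _ = ENNReal.ofReal (((2 * n + 1) ^ m : ℕ) * (2 * T)) := by
          rw [← ENNReal.ofReal_natCast, ← ENNReal.ofReal_mul (by positivity)]
      _ ≤ ENNReal.ofReal ((2 * a 0 * n / (1 - θ)) * ((2 * n + 1) * θ) ^ m) := by
          apply ENNReal.ofReal_le_ofReal
          have ham : a m ≤ a 0 * θ ^ m := by simpa using hgeo 0 m
          have hcast : (((2 * n + 1) ^ m : ℕ) : ℝ) = ((2 * (n:ℝ) + 1)) ^ m := by
            push_cast; ring
          rw [hcast, hT, mul_pow]
          have hpow : (0:ℝ) ≤ (2 * (n:ℝ) + 1) ^ m := by positivity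
          have hnum : (2 * (n:ℝ) + 1) ^ m * (2 * (a m * n)) ≤
              (2 * (n:ℝ) + 1) ^ m * (2 * (a 0 * θ ^ m * n)) := by
            apply mul_le_mul_of_nonneg_left _ hpow
            nlinarith
          calc (2 * (n:ℝ) + 1) ^ m * (2 * (a m * ↑n / (1 - θ)))
              = (2 * (n:ℝ) + 1) ^ m * (2 * (a m * n)) / (1 - θ) := by ring
            _ ≤ (2 * (n:ℝ) + 1) ^ m * (2 * (a 0 * θ ^ m * n)) / (1 - θ) :=
                (div_le_div_iff_of_pos_right h1θ).mpr hnum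
            _ = 2 * a 0 * ↑n / (1 - θ) * ((2 * ↑n + 1) ^ m * θ ^ m) := by ring
  -- conclude
  have hr0 : (0:ℝ) ≤ (2 * n + 1) * θ := by positivity
  have hr1 : (2 * (n:ℝ) + 1) * θ < 1 := by
    have := (lt_div_iff₀ h2n1).mp hθ
    linarith
  have htend : Filter.Tendsto
      (fun m => ENNReal.ofReal ((2 * a 0 * n / (1 - θ)) * ((2 * n + 1) * θ) ^ m))
      Filter.atTop (nhds 0) := by
    have h1 : Filter.Tendsto (fun m : ℕ => (2 * a 0 * n / (1 - θ)) * ((2 * n + 1) * θ) ^ m)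
        Filter.atTop (nhds 0) := by
      have := tendsto_pow_atTop_nhds_zero_of_lt_one hr0 hr1
      simpa using this.const_mul (2 * a 0 * n / (1 - θ))
    have := ENNReal.tendsto_ofReal h1
    simpa using this
  have : MeasureTheory.volume E ≤ 0 := ge_of_tendsto' htend key
  exact le_antisymm this zero_le
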